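/- (The Gaussian-location Bayesian learning procedure is strongly calibrated.) Let Φ denote the CDF of the standard Gaussian N(0,1), and let ρ be the joint law of (θ, y) where θ ~ N(0,1) and y | θ ~ N(θ, 1). The CDF of the Bayesian posterior N(y/2, 1/2) evaluated at θ is Φ(√2 (θ − y/2)). Then the pushforward of ρ under the map (θ, y) ↦ Φ(√2 (θ − y/2)) is exactly the uniform distribution on (0,1). -/

import Mathlib

open MeasureTheory ProbabilityTheory Set
open scoped NNReal ENNReal Real

/-- The uniform probability distribution on the open interval (0,1). -/
noncomputable def unif01 : Measure ℝ := volume.restrict (Ioo (0:ℝ) 1)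

/-- The CDF Φ of the standard Gaussian N(0,1). -/
noncomputable def stdGaussCDF (x : ℝ) : ℝ := ((gaussianReal 0 1) (Iic x)).toReal

/-- The joint law of (θ, y) where θ ~ N(0,1) and y | θ ~ N(θ, 1). -/
noncomputable def jointLaw : Measure (ℝ × ℝ) :=
  (gaussianReal 0 1).bind (fun θ : ℝ => (gaussianReal θ 1).map (fun y : ℝ => (θ, y)))

/- ### Auxiliary lemmas -/

lemma aux_measurable_pdf2 :
    Measurable (fun p : ℝ × ℝ => gaussianPDF p.1 1 p.2) := by
  apply Measurable.ennreal_ofReal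
  unfold gaussianPDFReal
  fun_prop

lemma aux_measurable_pdf3 :
    Measurable (fun p : ℝ × ℝ => gaussianPDF (Real.sqrt 2 / 2 * p.1) (1/2) p.2) := by
  apply Measurable.ennreal_ofReal
  unfold gaussianPDFReal
  fun_prop

/-- Measurability of the kernel defining jointLaw. -/
lemma aux_measurable_kernel :
    Measurable (fun θ : ℝ => (gaussianReal θ 1).map (fun y : ℝ => (θ, y))) := by
  apply Measure.measurable_of_measurable_coe
  intro s hs
  have h1 : ∀ θ : ℝ, ((gaussianReal θ 1).map (fun y : ℝ => (θ, y))) s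
      = ∫⁻ y, s.indicator (fun p : ℝ × ℝ => gaussianPDF p.1 1 p.2) (θ, y) := by
    intro θ
    rw [Measure.map_apply (by fun_prop) hs,
      gaussianReal_apply _ one_ne_zero,
      ← lintegral_indicator (measurable_prodMk_left hs)]
    congr 1
  simp only [h1]
  exact Measurable.lintegral_prod_right <|
    Measurable.comp (aux_measurable_pdf2.indicator hs) measurable_id
  -- the composition trick may need adjusting

lemma aux_measurable_kernel2 :
    Measurable (fun θ : ℝ => gaussianReal (Real.sqrt 2 / 2 * θ) (1/2 : ℝ≥0)) := by
  apply Measure.measurable_of_measurable_coe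
  intro s hs
  have h1 : ∀ θ : ℝ, gaussianReal (Real.sqrt 2 / 2 * θ) (1/2 : ℝ≥0) s
      = ∫⁻ y, s.indicator (fun y => gaussianPDF (Real.sqrt 2 / 2 * θ) (1/2) y) y := by
    intro θ
    rw [gaussianReal_apply _ (by norm_num), ← lintegral_indicator hs]
  simp only [h1]
  exact Measurable.lintegral_prod_right
    (aux_measurable_pdf3.indicator (measurable_snd hs))

/-- Pointwise pdf identity (completing the square). -/
lemma aux_key (x θ : ℝ) :
    gaussianPDFReal 0 1 θ * gaussianPDFReal (Real.sqrt 2 / 2 * θ) (1/2) x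
      = gaussianPDFReal 0 1 x *
        ((Real.sqrt π)⁻¹ * Real.exp (-(θ - Real.sqrt 2 / 2 * x)^2)) := by
  have hs2 : Real.sqrt 2 ^ 2 = 2 := Real.sq_sqrt (by norm_num)
  unfold gaussianPDFReal
  have hc : ((1/2 : ℝ≥0) : ℝ) = 1/2 := by norm_num
  rw [hc]
  rw [NNReal.coe_one]
  rw [show (2 * π * (1/2 : ℝ)) = π by ring]
  have e1 : -(θ - 0)^2/(2*1) + -(x - Real.sqrt 2 / 2 * θ)^2/(2*(1/2 : ℝ))
      = -(x - 0)^2/(2*1) + -(θ - Real.sqrt 2 / 2 * x)^2 := by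
    linear_combination ((x^2 - θ^2)/4) * hs2
  calc (Real.sqrt (2*π*1))⁻¹ * Real.exp (-(θ - 0)^2/(2*1)) *
        ((Real.sqrt π)⁻¹ * Real.exp (-(x - Real.sqrt 2 / 2 * θ)^2/(2*(1/2 : ℝ))))
      = (Real.sqrt (2*π*1))⁻¹ * (Real.sqrt π)⁻¹ *
        Real.exp (-(θ - 0)^2/(2*1) + -(x - Real.sqrt 2 / 2 * θ)^2/(2*(1/2 : ℝ))) := by
        rw [Real.exp_add]; ring
    _ = (Real.sqrt (2*π*1))⁻¹ * (Real.sqrt π)⁻¹ *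
        Real.exp (-(x - 0)^2/(2*1) + -(θ - Real.sqrt 2 / 2 * x)^2) := by rw [e1]
    _ = (Real.sqrt (2*π*1))⁻¹ * Real.exp (-(x - 0)^2/(2*1)) *
        ((Real.sqrt π)⁻¹ * Real.exp (-(θ - Real.sqrt 2 / 2 * x)^2)) := by
        rw [Real.exp_add]; ring

/-- The key Gaussian convolution identity at the level of pdfs (real version). -/
lemma aux_pdf_conv (x : ℝ) :
    ∫ θ : ℝ, gaussianPDFReal 0 1 θ * gaussianPDFReal (Real.sqrt 2 / 2 * θ) (1/2) x
      = gaussianPDFReal 0 1 x := by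
  have hpi : Real.sqrt π ≠ 0 := by positivity
  simp_rw [aux_key x]
  rw [integral_const_mul]
  rw [integral_const_mul]
  have h3 : ∫ θ : ℝ, Real.exp (-(θ - Real.sqrt 2 / 2 * x)^2) = Real.sqrt π := by
    rw [integral_sub_right_eq_self (fun θ : ℝ => Real.exp (-θ^2)) (Real.sqrt 2 / 2 * x)]
    have := integral_gaussian (1:ℝ)
    simpa using this
  rw [h3, inv_mul_cancel₀ hpi, mul_one]

/-- The key Gaussian convolution identity, lintegral version. -/
lemma aux_lintegral_conv (x : ℝ) :
    ∫⁻ θ : ℝ, gaussianPDF 0 1 θ * gaussianPDF (Real.sqrt 2 / 2 * θ) (1/2) x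
      = gaussianPDF 0 1 x := by
  have hint : Integrable (fun θ : ℝ =>
      gaussianPDFReal 0 1 θ * gaussianPDFReal (Real.sqrt 2 / 2 * θ) (1/2) x) := by
    simp_rw [aux_key x]
    apply Integrable.const_mul
    apply Integrable.const_mul
    have : Integrable (fun θ : ℝ => Real.exp (-(1:ℝ) * θ^2)) := integrable_exp_neg_mul_sq one_pos
    have h2 := this.comp_sub_right (Real.sqrt 2 / 2 * x)
    simpa using h2
  have hnn : 0 ≤ᵐ[(volume : Measure ℝ)] (fun θ : ℝ =>
      gaussianPDFReal 0 1 θ * gaussianPDFReal (Real.sqrt 2 / 2 * θ) (1/2) x) :=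
    Filter.Eventually.of_forall fun θ =>
      mul_nonneg (gaussianPDFReal_nonneg _ _ _) (gaussianPDFReal_nonneg _ _ _)
  have h1 : ∀ θ : ℝ, gaussianPDF 0 1 θ * gaussianPDF (Real.sqrt 2 / 2 * θ) (1/2) x
      = ENNReal.ofReal (gaussianPDFReal 0 1 θ * gaussianPDFReal (Real.sqrt 2 / 2 * θ) (1/2) x) := by
    intro θ
    rw [gaussianPDF_def, gaussianPDF_def,
      ENNReal.ofReal_mul (gaussianPDFReal_nonneg _ _ _)]
  simp_rw [h1]
  rw [← ofReal_integral_eq_lintegral_ofReal hint hnn, aux_pdf_conv x]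
  rfl

/-- The Gaussian convolution identity. -/
lemma aux_conv :
    ((gaussianReal 0 1).bind
      (fun θ : ℝ => gaussianReal (Real.sqrt 2 / 2 * θ) (1/2 : ℝ≥0))) = gaussianReal 0 1 := by
  have hhalf : (1/2 : ℝ≥0) ≠ 0 := by norm_num
  ext s hs
  rw [Measure.bind_apply hs aux_measurable_kernel2.aemeasurable]
  have hstep1 : ∀ θ : ℝ, gaussianReal (Real.sqrt 2 / 2 * θ) (1/2 : ℝ≥0) s
      = ∫⁻ x, s.indicator (fun x => gaussianPDF (Real.sqrt 2 / 2 * θ) (1/2) x) x := by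
    intro θ
    rw [gaussianReal_apply _ hhalf, ← lintegral_indicator hs]
  simp_rw [hstep1]
  have hmeas2 : Measurable fun θ : ℝ =>
      ∫⁻ x, s.indicator (fun x => gaussianPDF (Real.sqrt 2 / 2 * θ) (1/2) x) x :=
    Measurable.lintegral_prod_right (aux_measurable_pdf3.indicator (measurable_snd hs))
  rw [gaussianReal_of_var_ne_zero 0 one_ne_zero,
    lintegral_withDensity_eq_lintegral_mul _ (measurable_gaussianPDF 0 1) hmeas2]
  have hmeas : Measurable (Function.uncurry fun θ x =>
      s.indicator (fun x => gaussianPDF 0 1 θ * gaussianPDF (Real.sqrt 2 / 2 * θ) (1/2) x) x) := by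
    have : Measurable (fun p : ℝ × ℝ =>
        gaussianPDF 0 1 p.1 * gaussianPDF (Real.sqrt 2 / 2 * p.1) (1/2) p.2) :=
      ((measurable_gaussianPDF 0 1).comp measurable_fst).mul aux_measurable_pdf3
    exact this.indicator (measurable_snd hs)
  calc ∫⁻ θ, gaussianPDF 0 1 θ *
        ∫⁻ x, s.indicator (fun x => gaussianPDF (Real.sqrt 2 / 2 * θ) (1/2) x) x
      = ∫⁻ θ, ∫⁻ x, s.indicator
          (fun x => gaussianPDF 0 1 θ * gaussianPDF (Real.sqrt 2 / 2 * θ) (1/2) x) x := by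
        congr 1 with θ
        rw [← lintegral_const_mul _
          ((measurable_gaussianPDF (Real.sqrt 2 / 2 * θ) (1/2)).indicator hs)]
        congr 1 with x
        by_cases hx : x ∈ s <;> simp [Set.indicator, hx]
    _ = ∫⁻ x, ∫⁻ θ, s.indicator
          (fun x => gaussianPDF 0 1 θ * gaussianPDF (Real.sqrt 2 / 2 * θ) (1/2) x) x := by
        exact lintegral_lintegral_swap hmeas.aemeasurable
    _ = ∫⁻ x, s.indicator (fun x => ∫⁻ θ, gaussianPDF 0 1 θ *
          gaussianPDF (Real.sqrt 2 / 2 * θ) (1/2) x) x := by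
        congr 1 with x
        by_cases hx : x ∈ s <;> simp [Set.indicator, hx]
    _ = ∫⁻ x, s.indicator (fun x => gaussianPDF 0 1 x) x := by
        congr 1 with x
        congr 1
        ext x
        exact aux_lintegral_conv x
    _ = ∫⁻ x in s, gaussianPDF 0 1 x := lintegral_indicator hs _
    _ = (volume.withDensity (gaussianPDF 0 1)) s := (withDensity_apply _ hs).symm



lemma aux_cdf_eq : stdGaussCDF = cdf (gaussianReal 0 1) := by
  ext x
  rw [stdGaussCDF, cdf_eq_real, measureReal_def]

lemma aux_cdf_mono : Monotone stdGaussCDF := by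
  rw [aux_cdf_eq]; exact monotone_cdf _

lemma aux_cdf_meas : Measurable stdGaussCDF := aux_cdf_mono.measurable

lemma aux_cdf_integral (x : ℝ) :
    stdGaussCDF x = ∫ t in Iic x, gaussianPDFReal 0 1 t := by
  rw [stdGaussCDF, gaussianReal_apply_eq_integral 0 one_ne_zero,
    ENNReal.toReal_ofReal]
  exact setIntegral_nonneg measurableSet_Iic fun t _ => gaussianPDFReal_nonneg _ _ _

lemma aux_cdf_cont : Continuous stdGaussCDF := by
  have hint := integrable_gaussianPDFReal 0 1
  have h : stdGaussCDF = fun x => stdGaussCDF 0 + ∫ t in (0:ℝ)..x, gaussianPDFReal 0 1 t := by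
    funext x
    rw [aux_cdf_integral, aux_cdf_integral,
      ← intervalIntegral.integral_Iic_sub_Iic hint.integrableOn hint.integrableOn]
    ring
  rw [h]
  exact continuous_const.add
    (intervalIntegral.continuous_primitive (fun a b => hint.intervalIntegrable) 0)

lemma aux_cdf_strictMono : StrictMono stdGaussCDF := by
  intro a b hab
  have hint := integrable_gaussianPDFReal 0 1
  have h : stdGaussCDF b - stdGaussCDF a = ∫ t in a..b, gaussianPDFReal 0 1 t := by
    rw [aux_cdf_integral, aux_cdf_integral,
      intervalIntegral.integral_Iic_sub_Iic hint.integrableOn hint.integrableOn]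
  have hpos : 0 < ∫ t in a..b, gaussianPDFReal 0 1 t :=
    intervalIntegral.intervalIntegral_pos_of_pos
      hint.intervalIntegrable (fun t => gaussianPDFReal_pos _ _ _ one_ne_zero) hab
  linarith

lemma aux_cdf_pos (x : ℝ) : 0 < stdGaussCDF x := by
  rw [stdGaussCDF]
  refine ENNReal.toReal_pos ?_ (measure_ne_top _ _)
  intro h0
  have := (gaussianReal_absolutelyContinuous' 0 one_ne_zero) h0
  rw [Real.volume_Iic] at this
  exact ENNReal.top_ne_zero this

lemma aux_cdf_lt_one (x : ℝ) : stdGaussCDF x < 1 := by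
  have hunion : (gaussianReal 0 1) (Iic x) + (gaussianReal 0 1) (Ioi x)
      = (1 : ℝ≥0∞) := by
    rw [← measure_union (Iic_disjoint_Ioi le_rfl) measurableSet_Ioi, Iic_union_Ioi,
      measure_univ]
  have h2 : (gaussianReal 0 1) (Ioi x) ≠ 0 := by
    intro h0
    have := (gaussianReal_absolutelyContinuous' 0 one_ne_zero) h0
    rw [Real.volume_Ioi] at this
    exact ENNReal.top_ne_zero this
  have hlt : (gaussianReal 0 1) (Iic x) < 1 := by
    calc (gaussianReal 0 1) (Iic x)
        < (gaussianReal 0 1) (Iic x) + (gaussianReal 0 1) (Ioi x) :=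
          ENNReal.lt_add_right (measure_ne_top _ _) h2
      _ = 1 := hunion
  rw [stdGaussCDF]
  have h3 : ((gaussianReal 0 1) (Iic x)).toReal < (1 : ℝ≥0∞).toReal :=
    ENNReal.toReal_strict_mono ENNReal.one_ne_top hlt
  simpa using h3

/-- The pushforward of N(0,1) under its own CDF is uniform on (0,1). -/
lemma aux_cdf_map :
    (gaussianReal 0 1).map stdGaussCDF = unif01 := by
  have : IsProbabilityMeasure ((gaussianReal 0 1).map stdGaussCDF) :=
    Measure.isProbabilityMeasure_map aux_cdf_meas.aemeasurable
  refine MeasureTheory.Measure.ext_of_Iic _ _ fun t => ?_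
  rw [Measure.map_apply aux_cdf_meas measurableSet_Iic, unif01,
    Measure.restrict_apply measurableSet_Iic]
  by_cases h1 : 1 ≤ t
  · have hpre : stdGaussCDF ⁻¹' Iic t = univ :=
      eq_univ_of_forall fun x => le_trans (aux_cdf_lt_one x).le h1
    have hinter : Iic t ∩ Ioo (0:ℝ) 1 = Ioo 0 1 :=
      inter_eq_self_of_subset_right fun x hx => le_trans hx.2.le h1
    rw [hpre, hinter, measure_univ, Real.volume_Ioo]
    norm_num
  push_neg at h1
  by_cases h0 : t ≤ 0
  · have hpre : stdGaussCDF ⁻¹' Iic t = ∅ := by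
      refine eq_empty_of_forall_notMem fun x hx => ?_
      exact absurd (lt_of_lt_of_le (aux_cdf_pos x) hx) (not_lt.mpr h0)
    have hinter : Iic t ∩ Ioo (0:ℝ) 1 = ∅ := by
      refine eq_empty_of_forall_notMem fun x hx => ?_
      exact absurd (lt_of_lt_of_le hx.2.1 hx.1) (not_lt.mpr h0)
    rw [hpre, hinter]
    simp
  push_neg at h0
  -- 0 < t < 1 : find c with stdGaussCDF c = t
  have htb : Filter.Tendsto stdGaussCDF Filter.atBot (nhds 0) := by
    rw [aux_cdf_eq]; exact tendsto_cdf_atBot _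
  have htt : Filter.Tendsto stdGaussCDF Filter.atTop (nhds 1) := by
    rw [aux_cdf_eq]; exact tendsto_cdf_atTop _
  obtain ⟨a, ha⟩ := (htb.eventually_lt_const h0).exists
  obtain ⟨b, hb⟩ := (htt.eventually_const_lt h1).exists
  have hab : a ≤ b := by
    by_contra hba
    push_neg at hba
    exact absurd (aux_cdf_mono hba.le) (not_le.mpr (ha.trans hb))
  obtain ⟨c, _, hc⟩ := intermediate_value_Icc hab aux_cdf_cont.continuousOn
    (mem_Icc.mpr ⟨ha.le, hb.le⟩)
  have hpre : stdGaussCDF ⁻¹' Iic t = Iic c := by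
    ext x
    simp only [mem_preimage, mem_Iic, ← hc]
    exact aux_cdf_strictMono.le_iff_le
  have hinter : Iic t ∩ Ioo (0:ℝ) 1 = Ioc 0 t := by
    ext x
    simp only [mem_inter_iff, mem_Iic, mem_Ioo, mem_Ioc]
    constructor
    · rintro ⟨hxt, hx0, _⟩; exact ⟨hx0, hxt⟩
    · rintro ⟨hx0, hxt⟩; exact ⟨hxt, hx0, lt_of_le_of_lt hxt h1⟩
  rw [hpre, hinter, Real.volume_Ioc]
  have : (gaussianReal 0 1) (Iic c) = ENNReal.ofReal (stdGaussCDF c) := by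
    rw [stdGaussCDF, ENNReal.ofReal_toReal (measure_ne_top _ _)]
  rw [this, hc]
  norm_num

theorem stmt_14 :
    jointLaw.map
      (fun p : ℝ × ℝ => stdGaussCDF (Real.sqrt 2 * (p.1 - p.2 / 2))) = unif01 := by
  have hg : Measurable (fun p : ℝ × ℝ => Real.sqrt 2 * (p.1 - p.2 / 2)) := by fun_prop
  have hmap : jointLaw.map (fun p : ℝ × ℝ => Real.sqrt 2 * (p.1 - p.2 / 2))
      = gaussianReal 0 1 := by
    unfold jointLaw
    rw [← Measure.bind_dirac_eq_map _ hg,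
      Measure.bind_bind aux_measurable_kernel.aemeasurable (show Measurable fun p : ℝ × ℝ => Measure.dirac (Real.sqrt 2 * (p.1 - p.2 / 2)) from Measure.measurable_dirac.comp hg).aemeasurable]
    have hinner : (fun θ : ℝ => ((gaussianReal θ 1).map (fun y : ℝ => (θ, y))).bind
        (fun p : ℝ × ℝ => Measure.dirac (Real.sqrt 2 * (p.1 - p.2 / 2))))
        = fun θ : ℝ => gaussianReal (Real.sqrt 2 / 2 * θ) (1/2 : ℝ≥0) := by
      funext θ
      rw [Measure.bind_dirac_eq_map _ hg,
        Measure.map_map hg (by fun_prop : Measurable (fun y : ℝ => (θ, y)))]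
      have hcomp : ((fun p : ℝ × ℝ => Real.sqrt 2 * (p.1 - p.2 / 2)) ∘ (fun y : ℝ => (θ, y)))
          = (fun z : ℝ => z + Real.sqrt 2 * θ) ∘ (fun y : ℝ => (-(Real.sqrt 2) / 2) * y) := by
        funext y
        simp only [Function.comp_apply]
        ring
      rw [hcomp, ← Measure.map_map (by fun_prop) (by fun_prop),
        gaussianReal_map_const_mul, gaussianReal_map_add_const]
      have hmean : -(Real.sqrt 2) / 2 * θ + Real.sqrt 2 * θ = Real.sqrt 2 / 2 * θ := by ring
      have hvar : (⟨(-(Real.sqrt 2) / 2)^2, sq_nonneg _⟩ : ℝ≥0) * 1 = (1/2 : ℝ≥0) := by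
        have hs2 : Real.sqrt 2 ^ 2 = 2 := Real.sq_sqrt (by norm_num)
        ext
        push_cast
        rw [show (-(Real.sqrt 2) / 2)^2 = Real.sqrt 2 ^ 2 / 4 by ring, hs2]
        norm_num
      rw [hmean, ← hvar]
      rfl
    rw [hinner, aux_conv]
  have hcomp : (fun p : ℝ × ℝ => stdGaussCDF (Real.sqrt 2 * (p.1 - p.2 / 2)))
      = stdGaussCDF ∘ (fun p : ℝ × ℝ => Real.sqrt 2 * (p.1 - p.2 / 2)) := rfl
  rw [hcomp, ← Measure.map_map aux_cdf_meas hg, hmap, aux_cdf_map]
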